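/- For every integer j with 0 ≤ j ≤ j* = r·binomial(m,r)/lcm(m,r), there exists a set S of exactly j·lcm(m,r)/r many r-element subsets of {0,...,m−1} such that every element of {0,...,m−1} belongs to exactly j·lcm(m,r)/m members of S. -/

import Mathlib

open Finset

namespace EquitableAux

variable {α : Type*} [AddCommGroup α] [DecidableEq α]

def shift (A : Finset α) (v : α) : Finset α := A.image (· + v)

lemma mem_shift {A : Finset α} {v x : α} : x ∈ shift A v ↔ x - v ∈ A := by
  simp only [shift, mem_image]
  constructor
  · rintro ⟨a, ha, rfl⟩; simpa using ha
  · intro h; exact ⟨x - v, h, by abel⟩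

lemma card_shift (A : Finset α) (v : α) : (shift A v).card = A.card :=
  card_image_of_injective _ (fun a b h => by simpa using h)

lemma shift_zero (A : Finset α) : shift A 0 = A := by simp [shift]

lemma shift_shift (A : Finset α) (v w : α) :
    shift (shift A v) w = shift A (v + w) := by
  simp only [shift, image_image]
  congr 1
  funext a
  simp [add_assoc]

lemma sum_shift (A : Finset α) (v : α) :
    ∑ x ∈ shift A v, x = (∑ x ∈ A, x) + A.card • v := by
  rw [shift, sum_image (fun a _ b _ h => by simpa using h)]
  rw [sum_add_distrib, sum_const]

/-- sum trick : if `S` has card coprime to `M` and `shift S u = S` in `ZMod M`, then `u = 0`. -/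
lemma eq_zero_of_shift_eq_self {R M : ℕ} [NeZero M] (hcop : Nat.Coprime R M)
    {S : Finset (ZMod M)} (hS : S.card = R) {u : ZMod M} (h : shift S u = S) : u = 0 := by
  have hsum := sum_shift S u
  rw [h, hS] at hsum
  have h1 : R • u = 0 := by
    have := hsum.symm
    rwa [add_eq_left] at this
  have h0 : (R : ZMod M) * u = 0 := by rw [← nsmul_eq_mul]; exact h1
  have hu : IsUnit (R : ZMod M) := (ZMod.isUnit_iff_coprime R M).mpr hcop
  rcases hu with ⟨w, hw⟩
  calc u = ↑w⁻¹ * (↑w * u) := by rw [← mul_assoc]; simp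
    _ = 0 := by rw [hw, h0, mul_zero]


/-- If `A` is invariant under shifts from an additively closed finset `P`,
then `P.card` divides `A.card`. -/
lemma stab_card_dvd (P : Finset α) (h0 : (0:α) ∈ P)
    (hadd : ∀ p ∈ P, ∀ q ∈ P, p + q ∈ P) (A : Finset α)
    (hP : ∀ p ∈ P, shift A p = A) : P.card ∣ A.card := by
  induction A using Finset.strongInductionOn with
  | _ A ih =>
    rcases A.eq_empty_or_nonempty with rfl | ⟨x, hx⟩
    · simp
    · have hP' := hP
      set S := P.image (x + ·) with hSdef
      have hScard : S.card = P.card := card_image_of_injective _ (add_right_injective x)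
      have hSsub : S ⊆ A := by
        intro y hy
        rcases mem_image.mp hy with ⟨p, hp, rfl⟩
        rw [← hP p hp]
        exact mem_image.mpr ⟨x, hx, by rw [add_comm]⟩
      have hPimg : ∀ p ∈ P, P.image (· + p) = P := by
        intro p hp
        apply eq_of_subset_of_card_le
        · intro q hq; rcases mem_image.mp hq with ⟨q', hq', rfl⟩; exact hadd q' hq' p hp
        · rw [card_image_of_injective _ (add_left_injective p)]
      have hshiftS : ∀ p ∈ P, shift S p = S := by
        intro p hp
        simp only [shift, hSdef, image_image]
        rw [show ((· + p) ∘ (x + ·)) = ((x + ·) ∘ (· + p)) by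
          funext q; simp only [Function.comp_apply]; abel]
        rw [← image_image, hPimg p hp]
      have hA' : ∀ p ∈ P, shift (A \ S) p = A \ S := by
        intro p hp
        have : shift (A \ S) p = shift A p \ shift S p :=
          image_sdiff _ _ (fun a b h => by simpa using h)
        rw [this, hP p hp, hshiftS p hp]
      have hxS : x ∈ S := mem_image.mpr ⟨0, h0, by simp⟩
      have hss : A \ S ⊂ A :=
        Finset.sdiff_ssubset (by exact fun y hy => hSsub hy) ⟨x, hxS⟩
      have hdvd := ih (A \ S) hss hA'
      have hcard : A.card = (A \ S).card + S.card := by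
        rw [card_sdiff_of_subset hSsub]
        have := card_le_card hSsub
        omega
      rw [hcard, hScard]
      exact Nat.dvd_add hdvd dvd_rfl

/-- orbit–stabilizer for finset translation. -/
lemma orbit_mul_stab [Fintype α] (A : Finset α) :
    ((univ : Finset α).image (shift A)).card *
      ((univ : Finset α).filter (fun v => shift A v = A)).card = Fintype.card α := by
  classical
  have key : ∀ b ∈ (univ : Finset α).image (shift A),
      ((univ : Finset α).filter (fun v => shift A v = b)).card
        = ((univ : Finset α).filter (fun v => shift A v = A)).card := by
    intro b hb
    rcases mem_image.mp hb with ⟨v₀, _, rfl⟩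
    apply Finset.card_bij (fun v _ => v - v₀)
    · intro v hv
      simp only [mem_filter, mem_univ, true_and] at hv ⊢
      have := congrArg (fun S => shift S (-v₀)) hv
      simp only [shift_shift] at this
      rw [sub_eq_add_neg]
      rw [this]
      rw [add_neg_cancel, shift_zero]
    · intro a _ b _ h
      exact sub_left_injective h
    · intro p hp
      simp only [mem_filter, mem_univ, true_and] at hp
      refine ⟨p + v₀, ?_, by simp⟩
      simp only [mem_filter, mem_univ, true_and]
      rw [← shift_shift, hp]
  have htot := Finset.card_eq_sum_card_fiberwise
    (f := shift A) (s := (univ : Finset α)) (t := (univ : Finset α).image (shift A))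
    (fun v _ => mem_image_of_mem _ (mem_univ v))
  rw [Finset.sum_congr rfl key, sum_const, smul_eq_mul] at htot
  rw [← htot, card_univ]


section Blocks

variable (M G R : ℕ) [NeZero M] [NeZero G]

abbrev X := ZMod M × ZMod G

def slice (A : Finset (X M G)) (b : ZMod G) : Finset (ZMod M) :=
  (A.filter (fun x => x.2 = b)).image Prod.fst

lemma mem_slice {A : Finset (X M G)} {b : ZMod G} {a : ZMod M} :
    a ∈ slice M G A b ↔ (a, b) ∈ A := by
  simp only [slice, mem_image, mem_filter]
  constructor
  · rintro ⟨⟨a', b'⟩, ⟨hA, h2⟩, h1⟩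
    simp only at h1 h2
    rw [← h1, ← h2]; exact hA
  · intro h; exact ⟨(a, b), ⟨h, rfl⟩, rfl⟩

lemma card_slice (A : Finset (X M G)) (b : ZMod G) :
    (slice M G A b).card = (A.filter (fun x => x.2 = b)).card := by
  apply card_image_of_injOn
  intro x hx y hy hxy
  simp only [mem_coe, mem_filter] at hx hy
  exact Prod.ext hxy (hx.2.trans hy.2.symm)

lemma sum_card_slice (A : Finset (X M G)) :
    ∑ b : ZMod G, (slice M G A b).card = A.card := by
  have := Finset.card_eq_sum_card_fiberwise
    (f := Prod.snd) (s := A) (t := (univ : Finset (ZMod G))) (fun x _ => mem_univ _)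
  rw [this]
  exact Finset.sum_congr rfl (fun b _ => (card_slice M G A b))

def balanced (A : Finset (X M G)) : Prop := ∀ b : ZMod G, (slice M G A b).card = R

instance : DecidablePred (balanced M G R) := fun _ => by
  unfold balanced; infer_instance

lemma slice_shift (A : Finset (X M G)) (v : X M G) (b : ZMod G) :
    slice M G (shift A v) b = shift (slice M G A (b - v.2)) v.1 := by
  ext a
  rw [mem_slice, mem_shift, mem_shift, mem_slice]
  constructor
  · intro h; convert h using 2 <;> simp [Prod.ext_iff] at * <;> rfl
  · intro h; convert h using 2 <;> simp [Prod.ext_iff] at * <;> rfl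

lemma balanced_shift_of {A : Finset (X M G)} (v : X M G) (h : balanced M G R A) :
    balanced M G R (shift A v) := by
  intro b
  rw [slice_shift, card_shift]
  exact h _

lemma balanced_shift {A : Finset (X M G)} (v : X M G) :
    balanced M G R (shift A v) ↔ balanced M G R A := by
  refine ⟨fun h => ?_, balanced_shift_of M G R v⟩
  have := balanced_shift_of M G R (-v) h
  rwa [shift_shift, add_neg_cancel, shift_zero] at this


def Dorb (A : Finset (X M G)) : Finset (Finset (X M G)) :=
  (univ : Finset (ZMod M)).image (fun t => shift A (t, 0))

def Vorb (A : Finset (X M G)) : Finset (Finset (X M G)) :=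
  (univ : Finset (X M G)).image (shift A)

lemma mem_Dorb_self (A : Finset (X M G)) : A ∈ Dorb M G A :=
  mem_image.mpr ⟨0, mem_univ _, by rw [show ((0 : ZMod M), (0 : ZMod G)) = (0 : X M G) from rfl, shift_zero]⟩

lemma mem_Vorb_self (A : Finset (X M G)) : A ∈ Vorb M G A :=
  mem_image.mpr ⟨0, mem_univ _, shift_zero A⟩

lemma Dorb_shift (A : Finset (X M G)) (t : ZMod M) :
    Dorb M G (shift A (t, 0)) = Dorb M G A := by
  ext B
  simp only [Dorb, mem_image, mem_univ, true_and]
  constructor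
  · rintro ⟨s, rfl⟩
    exact ⟨t + s, by rw [shift_shift, Prod.mk_add_mk, add_zero]⟩
  · rintro ⟨s, rfl⟩
    exact ⟨s - t, by rw [shift_shift, Prod.mk_add_mk, add_zero, add_sub_cancel]⟩

lemma Vorb_shift (A : Finset (X M G)) (v : X M G) :
    Vorb M G (shift A v) = Vorb M G A := by
  ext B
  simp only [Vorb, mem_image, mem_univ, true_and]
  constructor
  · rintro ⟨s, rfl⟩; exact ⟨v + s, by rw [shift_shift]⟩
  · rintro ⟨s, rfl⟩; exact ⟨s - v, by rw [shift_shift, add_sub_cancel]⟩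

lemma card_mem_Dorb {A B : Finset (X M G)} (h : B ∈ Dorb M G A) : B.card = A.card := by
  rcases mem_image.mp h with ⟨t, _, rfl⟩; exact card_shift _ _

lemma card_mem_Vorb {A B : Finset (X M G)} (h : B ∈ Vorb M G A) : B.card = A.card := by
  rcases mem_image.mp h with ⟨v, _, rfl⟩; exact card_shift _ _

lemma Dorb_inj (hcop : Nat.Coprime R M) {A : Finset (X M G)} (hbal : balanced M G R A) :
    Function.Injective (fun t : ZMod M => shift A (t, 0)) := by
  intro t t' h
  simp only at h
  have h2 : shift A (t - t', 0) = A := by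
    have := congrArg (fun S => shift S (-t', 0)) h
    simp only [shift_shift, Prod.mk_add_mk, add_zero] at this
    rw [show t + -t' = t - t' by abel] at this
    rw [this, add_neg_cancel]
    rw [show ((0 : ZMod M), (0 : ZMod G)) = (0 : X M G) from rfl, shift_zero]
  have hs : shift (slice M G A (0 : ZMod G)) (t - t') = slice M G A (0 : ZMod G) := by
    conv_rhs => rw [← h2]
    rw [slice_shift]
    simp
  have := eq_zero_of_shift_eq_self hcop (hbal (0 : ZMod G)) hs
  rw [sub_eq_zero] at this
  exact this

lemma card_Dorb (hcop : Nat.Coprime R M) {A : Finset (X M G)} (hbal : balanced M G R A) :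
    (Dorb M G A).card = M := by
  rw [Dorb, card_image_of_injective _ (Dorb_inj M G R hcop hbal), card_univ, ZMod.card]

lemma cov_Dorb (hcop : Nat.Coprime R M) {A : Finset (X M G)} (hbal : balanced M G R A)
    (x : X M G) : ((Dorb M G A).filter (fun B => x ∈ B)).card = R := by
  rw [Dorb, Finset.filter_image,
    card_image_of_injective _ (Dorb_inj M G R hcop hbal)]
  have hmem : ∀ t : ZMod M, x ∈ shift A (t, 0) ↔ x.1 - t ∈ slice M G A x.2 := by
    intro t
    rw [mem_shift, mem_slice]
    have : x - (t, 0) = (x.1 - t, x.2) := by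
      ext <;> simp
    rw [this]
  have : (univ.filter (fun t : ZMod M => x ∈ shift A (t, 0)))
      = (slice M G A x.2).image (fun a => x.1 - a) := by
    ext t
    simp only [mem_filter, mem_univ, true_and, mem_image, hmem]
    constructor
    · intro h; exact ⟨x.1 - t, h, by abel⟩
    · rintro ⟨a, ha, rfl⟩; simpa using ha
  rw [this, card_image_of_injective _ (fun a b h => by simpa using h), hbal x.2]

lemma cov_Vorb_const (A : Finset (X M G)) (x v : X M G) :
    ((Vorb M G A).filter (fun B => x + v ∈ B)).card
      = ((Vorb M G A).filter (fun B => x ∈ B)).card := by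
  apply Finset.card_bij (fun B _ => shift B (-v))
  · intro B hB
    simp only [mem_filter] at hB ⊢
    constructor
    · rcases mem_image.mp hB.1 with ⟨w, _, rfl⟩
      rw [shift_shift]
      exact mem_image.mpr ⟨w + -v, mem_univ _, rfl⟩
    · rw [mem_shift, sub_neg_eq_add]
      exact hB.2
  · intro B _ B' _ h
    have := congrArg (fun S => shift S v) h
    simpa [shift_shift, shift_zero] using this
  · intro B hB
    simp only [mem_filter] at hB
    refine ⟨shift B v, ?_, ?_⟩
    · simp only [mem_filter]
      constructor
      · rcases mem_image.mp hB.1 with ⟨w, _, rfl⟩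
        rw [shift_shift]
        exact mem_image.mpr ⟨w + v, mem_univ _, rfl⟩
      · rw [mem_shift]
        simpa using hB.2
    · rw [shift_shift]
      simp [shift_zero]

lemma cov_Vorb (A : Finset (X M G)) (x : X M G) :
    ((Vorb M G A).filter (fun B => x ∈ B)).card * (M * G)
      = (Vorb M G A).card * A.card := by
  have hconst : ∀ y : X M G, ((Vorb M G A).filter (fun B => y ∈ B)).card
      = ((Vorb M G A).filter (fun B => x ∈ B)).card := by
    intro y
    have := cov_Vorb_const M G A x (y - x)
    rwa [add_sub_cancel] at this
  have hdouble : ∑ y : X M G, ((Vorb M G A).filter (fun B => y ∈ B)).card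
      = ∑ B ∈ Vorb M G A, B.card := by
    have h1 : ∀ y : X M G, ((Vorb M G A).filter (fun B => y ∈ B)).card
        = ∑ B ∈ Vorb M G A, (if y ∈ B then 1 else 0) := fun y =>
      Finset.card_filter _ _
    have h2 : ∀ B : Finset (X M G), B.card = ∑ y : X M G, (if y ∈ B then 1 else 0) := by
      intro B
      rw [← Finset.card_filter]
      congr 1
      ext y
      simp
    calc ∑ y : X M G, ((Vorb M G A).filter (fun B => y ∈ B)).card
        = ∑ y : X M G, ∑ B ∈ Vorb M G A, (if y ∈ B then 1 else 0) := by
          exact Finset.sum_congr rfl (fun y _ => h1 y)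
      _ = ∑ B ∈ Vorb M G A, ∑ y : X M G, (if y ∈ B then 1 else 0) := Finset.sum_comm
      _ = ∑ B ∈ Vorb M G A, B.card := Finset.sum_congr rfl (fun B _ => (h2 B).symm)
  have hcards : ∑ B ∈ Vorb M G A, B.card = (Vorb M G A).card * A.card := by
    rw [Finset.sum_congr rfl (fun B hB => card_mem_Vorb M G hB), sum_const, smul_eq_mul]
  have hleft : ∑ y : X M G, ((Vorb M G A).filter (fun B => y ∈ B)).card
      = ((Vorb M G A).filter (fun B => x ∈ B)).card * (M * G) := by
    rw [Finset.sum_congr rfl (fun y _ => hconst y), sum_const, smul_eq_mul, card_univ]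
    rw [show Fintype.card (X M G) = M * G by simp [ZMod.card], mul_comm]
  rw [← hleft, hdouble, hcards]

lemma card_Vorb_dvd_helper (A : Finset (X M G)) :
    ∃ d : ℕ, 0 < d ∧ d ∣ A.card ∧ (Vorb M G A).card * d = M * G := by
  classical
  set P := (univ : Finset (X M G)).filter (fun v => shift A v = A) with hP
  refine ⟨P.card, ?_, ?_, ?_⟩
  · apply Finset.card_pos.mpr
    exact ⟨0, by simp [hP, shift_zero]⟩
  · apply stab_card_dvd
    · simp [hP, shift_zero]
    · intro p hp q hq
      simp only [hP, mem_filter, mem_univ, true_and] at hp hq ⊢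
      rw [← shift_shift, hp, hq]
    · intro p hp
      simp only [hP, mem_filter, mem_univ, true_and] at hp
      exact hp
  · have := orbit_mul_stab A
    rw [show Fintype.card (X M G) = M * G by simp [ZMod.card]] at this
    exact this


def Ival : Finset (ZMod M) := (Finset.range R).image (Nat.cast)

lemma card_Ival (hRM : R ≤ M) : (Ival M R).card = R := by
  rw [Ival, card_image_of_injOn, card_range]
  intro a ha b hb h
  simp only [coe_range, Set.mem_Iio] at ha hb
  have := congrArg ZMod.val h
  rwa [ZMod.val_cast_of_lt (lt_of_lt_of_le ha hRM),
    ZMod.val_cast_of_lt (lt_of_lt_of_le hb hRM)] at this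

def psi (st : ZMod G → ZMod M) : Finset (X M G) :=
  (univ : Finset (X M G)).filter (fun x => x.1 - st x.2 ∈ Ival M R)

lemma slice_psi (st : ZMod G → ZMod M) (b : ZMod G) :
    slice M G (psi M G R st) b = shift (Ival M R) (st b) := by
  ext a
  rw [mem_slice, mem_shift]
  simp [psi]

lemma balanced_psi (hRM : R ≤ M) (st : ZMod G → ZMod M) :
    balanced M G R (psi M G R st) := by
  intro b
  rw [slice_psi, card_shift, card_Ival M R hRM]

lemma card_psi (hRM : R ≤ M) (st : ZMod G → ZMod M) :
    (psi M G R st).card = G * R := by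
  rw [← sum_card_slice]
  rw [Finset.sum_congr rfl (fun b _ => by rw [slice_psi, card_shift, card_Ival M R hRM])]
  rw [sum_const, smul_eq_mul, card_univ, ZMod.card]

lemma psi_inj (hcop : Nat.Coprime R M) (hRM : R ≤ M) :
    Function.Injective (psi M G R) := by
  intro st st' h
  funext b
  have hsl : shift (Ival M R) (st b) = shift (Ival M R) (st' b) := by
    rw [← slice_psi, ← slice_psi, h]
  have h2 : shift (shift (Ival M R) (st b)) (-(st' b)) = Ival M R := by
    rw [hsl, shift_shift, add_neg_cancel, shift_zero]
  rw [shift_shift] at h2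
  have := eq_zero_of_shift_eq_self hcop (card_Ival M R hRM) h2
  have : st b - st' b = 0 := by rwa [sub_eq_add_neg]
  rwa [sub_eq_zero] at this

end Blocks

/-- Abstract selection lemma: from blocks whose sizes are positive multiples of `u`,
with every block bounded by (number of unit blocks)·u, any multiple of `u`
up to the total can be realized as a subset sum. -/
lemma sel {β : Type*} [DecidableEq β] (B : Finset β) (f : β → ℕ) (u : ℕ) (hu : 0 < u)
    (hdvd : ∀ b ∈ B, u ∣ f b) (hpos : ∀ b ∈ B, 0 < f b)
    (hbig : ∀ b ∈ B, f b ≤ (B.filter (fun b => f b = u)).card * u)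
    (N : ℕ) (hNd : u ∣ N) (hN : N ≤ ∑ b ∈ B, f b) :
    ∃ D ⊆ B, ∑ b ∈ D, f b = N := by
  classical
  set B₁ := B.filter (fun b => f b = u) with hB₁
  set B₂ := B.filter (fun b => ¬ f b = u) with hB₂
  have hB₂B : B₂ ⊆ B := filter_subset _ _
  have hB₁card : ∑ b ∈ B₁, f b = B₁.card * u := by
    rw [Finset.sum_congr rfl (fun b hb => (mem_filter.mp hb).2), sum_const, smul_eq_mul]
  -- maximal subset-sum of B₂ that is ≤ N
  have hPne : ((B₂.powerset).filter (fun D => ∑ b ∈ D, f b ≤ N)).Nonempty :=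
    ⟨∅, by simp⟩
  obtain ⟨D₂, hD₂mem, hD₂max⟩ :=
    Finset.exists_max_image _ (fun D => ∑ b ∈ D, f b) hPne
  simp only [mem_filter, mem_powerset] at hD₂mem
  obtain ⟨hD₂sub, hD₂le⟩ := hD₂mem
  set p := ∑ b ∈ D₂, f b with hp
  have hgap : N - p ≤ B₁.card * u := by
    by_contra hcon
    push_neg at hcon
    have hplt : p + B₁.card * u < N := by omega
    have hsum : ∑ b ∈ B₁, f b + ∑ b ∈ B₂, f b = ∑ b ∈ B, f b :=
      Finset.sum_filter_add_sum_filter_not B _ f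
    have h2 : p < ∑ b ∈ B₂, f b := by omega
    have hrest : 0 < ∑ b ∈ B₂ \ D₂, f b := by
      have := Finset.sum_sdiff hD₂sub (f := f)
      omega
    obtain ⟨b, hb, hfb⟩ : ∃ b ∈ B₂ \ D₂, 0 < f b := by
      by_contra hall
      push_neg at hall
      have : ∑ b ∈ B₂ \ D₂, f b = 0 :=
        Finset.sum_eq_zero (fun b hb => by have := hall b hb; omega)
      omega
    have hbB : b ∈ B := hB₂B (mem_sdiff.mp hb).1
    have hble : f b ≤ B₁.card * u := hbig b hbB
    have hnotin : b ∉ D₂ := (mem_sdiff.mp hb).2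
    have hins : ∑ c ∈ insert b D₂, f c = f b + p := by
      rw [Finset.sum_insert hnotin]
    have hinsmem : insert b D₂ ∈ (B₂.powerset).filter (fun D => ∑ b ∈ D, f b ≤ N) := by
      simp only [mem_filter, mem_powerset]
      constructor
      · exact insert_subset (mem_sdiff.mp hb).1 hD₂sub
      · omega
    have := hD₂max _ hinsmem
    omega
  have hpd : u ∣ p := Finset.dvd_sum (fun b hb => hdvd b (hB₂B (hD₂sub hb)))
  have hgapd : u ∣ N - p := (Nat.dvd_sub hNd hpd)
  set t := (N - p) / u with ht
  have htu : t * u = N - p := Nat.div_mul_cancel hgapd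
  have htle : t ≤ B₁.card := by
    by_contra hcon
    push_neg at hcon
    have : (B₁.card + 1) * u ≤ t * u := Nat.mul_le_mul_right u hcon
    have hupos := hu
    nlinarith [htu, hgap]
  obtain ⟨C₁, hC₁sub, hC₁card⟩ := Finset.exists_subset_card_eq htle
  refine ⟨D₂ ∪ C₁, ?_, ?_⟩
  · apply union_subset (hD₂sub.trans hB₂B) (hC₁sub.trans (filter_subset _ _))
  · have hdisj : Disjoint D₂ C₁ := by
      apply Finset.disjoint_left.mpr
      intro a haD haC
      have h1 := (mem_filter.mp (hD₂sub haD)).2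
      have h2 := (mem_filter.mp (hC₁sub haC)).2
      exact h1 h2
    rw [Finset.sum_union hdisj]
    have : ∑ b ∈ C₁, f b = t * u := by
      rw [Finset.sum_congr rfl (fun b hb => (mem_filter.mp (hC₁sub hb)).2),
        sum_const, smul_eq_mul, hC₁card]
    omega


section Main

variable (M G R : ℕ) [NeZero M] [NeZero G]

def blk (A : Finset (X M G)) : Finset (Finset (X M G)) :=
  if balanced M G R A then Dorb M G A else Vorb M G A

lemma mem_blk_self (A : Finset (X M G)) : A ∈ blk M G R A := by
  unfold blk; split
  · exact mem_Dorb_self M G A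
  · exact mem_Vorb_self M G A

lemma card_mem_blk {A B : Finset (X M G)} (h : B ∈ blk M G R A) : B.card = A.card := by
  unfold blk at h; split at h
  · exact card_mem_Dorb M G h
  · exact card_mem_Vorb M G h

lemma blk_eq_of_mem {A B : Finset (X M G)} (h : B ∈ blk M G R A) :
    blk M G R B = blk M G R A := by
  unfold blk at h ⊢
  by_cases hbal : balanced M G R A
  · rw [if_pos hbal] at h
    rcases mem_image.mp h with ⟨t, _, rfl⟩
    rw [if_pos hbal, if_pos (balanced_shift_of M G R _ hbal), Dorb_shift]
  · rw [if_neg hbal] at h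
    rcases mem_image.mp h with ⟨v, _, rfl⟩
    rw [if_neg hbal, if_neg (fun hc => hbal ((balanced_shift M G R v).mp hc)), Vorb_shift]

theorem main (hcop : Nat.Coprime M R) (hR1 : 1 ≤ R) (hRM : R ≤ M) (j : ℕ)
    (hj : j * M ≤ (M * G).choose (G * R)) :
    ∃ S : Finset (Finset (X M G)),
      (∀ A ∈ S, A.card = G * R) ∧ S.card = j * M ∧
      ∀ x : X M G, (S.filter (fun A => x ∈ A)).card = j * R := by
  classical
  have hcop' : Nat.Coprime R M := hcop.symm
  have hMpos : 0 < M := Nat.pos_of_ne_zero (NeZero.ne M)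
  have hGpos : 0 < G := Nat.pos_of_ne_zero (NeZero.ne G)
  have hcardX : Fintype.card (X M G) = M * G := by simp [ZMod.card]
  set Om : Finset (Finset (X M G)) := (univ : Finset (X M G)).powersetCard (G * R) with hOm
  have hmemOm : ∀ {A : Finset (X M G)}, A ∈ Om ↔ A.card = G * R := by
    intro A; rw [hOm]; exact mem_powersetCard_univ
  have hOmcard : Om.card = (M * G).choose (G * R) := by
    rw [hOm, card_powersetCard, card_univ, hcardX]
  -- blocks
  set B : Finset (Finset (Finset (X M G))) := Om.image (blk M G R) with hB
  have hblk_sub : ∀ A ∈ Om, ∀ B' ∈ blk M G R A, B' ∈ Om := by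
    intro A hA B' hB'
    rw [hmemOm]
    rw [card_mem_blk M G R hB']
    exact hmemOm.mp hA
  have hdisj : ∀ b₁ ∈ B, ∀ b₂ ∈ B, b₁ ≠ b₂ → Disjoint b₁ b₂ := by
    intro b₁ hb₁ b₂ hb₂ hne
    rcases mem_image.mp hb₁ with ⟨A₁, _, rfl⟩
    rcases mem_image.mp hb₂ with ⟨A₂, _, rfl⟩
    apply Finset.disjoint_left.mpr
    intro C hC1 hC2
    exact hne ((blk_eq_of_mem M G R hC1).symm.trans (blk_eq_of_mem M G R hC2))
  have hbiUnion : B.biUnion id = Om := by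
    ext A
    simp only [mem_biUnion, id]
    constructor
    · rintro ⟨b, hb, hAb⟩
      rcases mem_image.mp hb with ⟨A₀, hA₀, rfl⟩
      exact hblk_sub A₀ hA₀ A hAb
    · intro hA
      exact ⟨blk M G R A, mem_image_of_mem _ hA, mem_blk_self M G R A⟩
  have hsumB : ∑ b ∈ B, b.card = (M * G).choose (G * R) := by
    rw [← hOmcard, ← hbiUnion]
    exact (card_biUnion hdisj).symm
  -- block size facts
  have hblk_bal : ∀ A, balanced M G R A → (blk M G R A).card = M := by
    intro A hbal
    rw [blk, if_pos hbal]
    exact card_Dorb M G R hcop' hbal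
  have hblk_unbal : ∀ A ∈ Om, ¬ balanced M G R A →
      ∃ e : ℕ, 1 ≤ e ∧ e ≤ G ∧ (blk M G R A).card = M * e := by
    intro A hA hbal
    rw [blk, if_neg hbal]
    obtain ⟨d, hd0, hddvd, hdmul⟩ := card_Vorb_dvd_helper M G A
    rw [hmemOm.mp hA] at hddvd
    have h1 : d ∣ M * G := ⟨(Vorb M G A).card, by rw [← hdmul]; ring⟩
    have hdG : d ∣ G := by
      have h2 : d ∣ Nat.gcd (M * G) (R * G) :=
        Nat.dvd_gcd h1 (by rwa [mul_comm G R] at hddvd)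
      rwa [Nat.gcd_mul_right, Nat.Coprime.gcd_eq_one hcop, one_mul] at h2
    obtain ⟨e, hGe⟩ := hdG
    refine ⟨e, ?_, ?_, ?_⟩
    · rcases Nat.eq_zero_or_pos e with rfl | h
      · rw [hGe] at hGpos; omega
      · exact h
    · exact Nat.le_of_dvd hGpos ⟨d, by rw [hGe]; ring⟩
    · apply Nat.eq_of_mul_eq_mul_right hd0
      rw [hdmul, hGe]; ring
  -- coverage identity per block
  have hcov : ∀ A ∈ Om, ∀ x : X M G,
      ((blk M G R A).filter (fun C => x ∈ C)).card * (M * G)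
        = (blk M G R A).card * (G * R) := by
    intro A hA x
    by_cases hbal : balanced M G R A
    · rw [blk, if_pos hbal, cov_Dorb M G R hcop' hbal x,
        card_Dorb M G R hcop' hbal]
      ring
    · rw [blk, if_neg hbal]
      rw [cov_Vorb M G A x, hmemOm.mp hA]
  -- unit block count bound
  set U := (B.filter (fun b => b.card = M)).card with hU
  have hbig : ∀ b ∈ B, b.card ≤ U * M := by
    intro b hb
    rcases mem_image.mp hb with ⟨A, hA, rfl⟩
    by_cases hbal : balanced M G R A
    · have hcard := hblk_bal A hbal
      have hUpos : 1 ≤ U := by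
        apply Finset.card_pos.mpr
        exact ⟨blk M G R A, mem_filter.mpr ⟨hb, hcard⟩⟩
      rw [hcard]
      calc M = 1 * M := (one_mul M).symm
        _ ≤ U * M := Nat.mul_le_mul_right M hUpos
    · -- R < M
      have hslice_le : ∀ (C : Finset (X M G)) (bb : ZMod G), (slice M G C bb).card ≤ M := by
        intro C bb
        calc (slice M G C bb).card ≤ Fintype.card (ZMod M) := Finset.card_le_univ _
          _ = M := ZMod.card M
      have hRM' : R < M := by
        rcases lt_or_eq_of_le hRM with h | h
        · exact h
        · exfalso
          apply hbal
          intro bb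
          by_contra hne
          have hlt : (slice M G A bb).card < M := by
            have := hslice_le A bb
            omega
          have hsum := sum_card_slice M G A
          rw [hmemOm.mp hA] at hsum
          have hstrict : ∑ b : ZMod G, (slice M G A b).card
              < ∑ _b : ZMod G, M := by
            apply Finset.sum_lt_sum (fun i _ => hslice_le A i)
            exact ⟨bb, mem_univ _, hlt⟩
          rw [hsum, Finset.sum_const, smul_eq_mul, card_univ, ZMod.card] at hstrict
          rw [← h] at hstrict
          omega
      have hM2 : 2 ≤ M := by omega
      -- the psi family shows M^G ≤ U * M
      have hpsiBound : M ^ G ≤ U * M := by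
        have hFsub : (univ : Finset (ZMod G → ZMod M)).image (psi M G R)
            ⊆ (B.filter (fun b => b.card = M)).biUnion id := by
          intro A' hA'
          rcases mem_image.mp hA' with ⟨st, _, rfl⟩
          have hbalpsi := balanced_psi M G R hRM st
          have hpsiOm : psi M G R st ∈ Om := hmemOm.mpr (card_psi M G R hRM st)
          apply mem_biUnion.mpr
          refine ⟨blk M G R (psi M G R st), ?_, mem_blk_self M G R _⟩
          exact mem_filter.mpr ⟨mem_image_of_mem _ hpsiOm, hblk_bal _ hbalpsi⟩
        have hFcard : ((univ : Finset (ZMod G → ZMod M)).image (psi M G R)).card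
            = M ^ G := by
          rw [card_image_of_injective _ (psi_inj M G R hcop' hRM), card_univ,
            Fintype.card_fun, ZMod.card, ZMod.card]
        calc M ^ G = ((univ : Finset (ZMod G → ZMod M)).image (psi M G R)).card :=
              hFcard.symm
          _ ≤ ((B.filter (fun b => b.card = M)).biUnion id).card :=
              card_le_card hFsub
          _ ≤ ∑ b ∈ B.filter (fun b => b.card = M), (id b).card :=
              card_biUnion_le
          _ = ∑ _b ∈ B.filter (fun b => b.card = M), M :=
              Finset.sum_congr rfl (fun b hb => by
                simp only [id]; exact (mem_filter.mp hb).2)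
          _ = U * M := by rw [sum_const, smul_eq_mul]
      obtain ⟨e, he1, heG, hecard⟩ := hblk_unbal A hA hbal
      rw [hecard]
      have hGM : G ≤ M ^ (G - 1) := by
        calc G ≤ 2 ^ (G - 1) := by
              have := Nat.lt_two_pow_self (n := G - 1)
              omega
          _ ≤ M ^ (G - 1) := Nat.pow_le_pow_left hM2 _
      calc M * e ≤ M * G := Nat.mul_le_mul_left M heG
        _ ≤ M * M ^ (G - 1) := Nat.mul_le_mul_left M hGM
        _ = M ^ G := by
            rw [← pow_succ']
            congr 1
            omega
        _ ≤ U * M := hpsiBound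
  -- apply selection
  have hdvdB : ∀ b ∈ B, M ∣ b.card := by
    intro b hb
    rcases mem_image.mp hb with ⟨A, hA, rfl⟩
    by_cases hbal : balanced M G R A
    · rw [hblk_bal A hbal]
    · obtain ⟨e, _, _, hecard⟩ := hblk_unbal A hA hbal
      exact ⟨e, hecard⟩
  have hposB : ∀ b ∈ B, 0 < b.card := by
    intro b hb
    rcases mem_image.mp hb with ⟨A, _, rfl⟩
    exact Finset.card_pos.mpr ⟨A, mem_blk_self M G R A⟩
  obtain ⟨D, hDB, hDsum⟩ := sel B Finset.card M hMpos hdvdB hposB hbig (j * M)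
    ⟨j, mul_comm j M⟩ (by rw [hsumB]; exact hj)
  -- assemble
  refine ⟨D.biUnion (fun b => b), ?_, ?_, ?_⟩
  · intro A hA
    rcases mem_biUnion.mp hA with ⟨b, hb, hAb⟩
    have : A ∈ Om := by
      rcases mem_image.mp (hDB hb) with ⟨A₀, hA₀, rfl⟩
      exact hblk_sub A₀ hA₀ A hAb
    exact hmemOm.mp this
  · rw [card_biUnion (fun b hb c hc hne => hdisj b (hDB hb) c (hDB hc) hne)]
    exact hDsum
  · intro x
    have hfb : (D.biUnion (fun b => b)).filter (fun A => x ∈ A)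
        = D.biUnion (fun b => b.filter (fun A => x ∈ A)) := by
      ext A
      simp only [mem_filter, mem_biUnion]
      tauto
    rw [hfb]
    have hcards : (D.biUnion (fun b => b.filter (fun A => x ∈ A))).card
        = ∑ b ∈ D, (b.filter (fun A => x ∈ A)).card := by
      apply card_biUnion
      intro b hb c hc hne
      exact (hdisj b (hDB hb) c (hDB hc) hne).mono (filter_subset _ _) (filter_subset _ _)
    rw [hcards]
    have hkey : (∑ b ∈ D, (b.filter (fun A => x ∈ A)).card) * (M * G)
        = (j * R) * (M * G) := by
      rw [Finset.sum_mul]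
      have : ∀ b ∈ D, (b.filter (fun A => x ∈ A)).card * (M * G) = b.card * (G * R) := by
        intro b hb
        rcases mem_image.mp (hDB hb) with ⟨A, hA, rfl⟩
        exact hcov A hA x
      rw [Finset.sum_congr rfl this, ← Finset.sum_mul, hDsum]
      ring
    have hMGpos : 0 < M * G := Nat.mul_pos hMpos hGpos
    exact Nat.eq_of_mul_eq_mul_right hMGpos hkey

end Main

end EquitableAux


/-- For every `j` with `0 ≤ j ≤ j* = r·C(m,r)/lcm(m,r)`, there exists a family `S` of
exactly `j·lcm(m,r)/r` many `r`-element subsets of `{0,…,m−1}` such that every element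
of `{0,…,m−1}` belongs to exactly `j·lcm(m,r)/m` members of `S`. -/
theorem equitable_family_exists (m r j : ℕ) (hr1 : 1 ≤ r) (hrm : r ≤ m)
    (hj : j ≤ r * m.choose r / Nat.lcm m r) :
    ∃ S : Finset (Finset (Fin m)),
      (∀ g ∈ S, g.card = r) ∧
      S.card = j * (Nat.lcm m r / r) ∧
      ∀ i : Fin m, (S.filter (fun g => i ∈ g)).card = j * (Nat.lcm m r / m) := by
  classical
  set g := m.gcd r with hgdef
  have hr0 : 0 < r := hr1
  have hm0 : 0 < m := lt_of_lt_of_le hr1 hrm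
  have hg : 0 < g := Nat.gcd_pos_of_pos_right m hr0
  set M := m / g with hMdef
  set G := g with hGdef
  set R := r / g with hRdef
  have hMG : M * G = m := Nat.div_mul_cancel (Nat.gcd_dvd_left m r)
  have hGR : G * R = r := Nat.mul_div_cancel' (Nat.gcd_dvd_right m r)
  have hM : 0 < M := by
    rcases Nat.eq_zero_or_pos M with h | h
    · rw [h, zero_mul] at hMG; omega
    · exact h
  have hG : 0 < G := hg
  have hR1 : 1 ≤ R := by
    rcases Nat.eq_zero_or_pos R with h | h
    · rw [h, mul_zero] at hGR; omega
    · exact h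
  have hcop : Nat.Coprime M R := Nat.coprime_div_gcd_div_gcd hg
  have hRM : R ≤ M := Nat.div_le_div_right hrm
  have hlcmr : m.lcm r = M * r := by
    apply Nat.eq_of_mul_eq_mul_left hg
    have h1 := Nat.gcd_mul_lcm m r
    rw [← hgdef] at h1
    rw [h1, ← hMG]; ring
  have hlcmm : m.lcm r = R * m := by
    apply Nat.eq_of_mul_eq_mul_left hg
    have h1 := Nat.gcd_mul_lcm m r
    rw [← hgdef] at h1
    rw [h1, ← hGR]; ring
  have hdiv1 : Nat.lcm m r / r = M := by
    rw [hlcmr, Nat.mul_div_cancel _ hr0]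
  have hdiv2 : Nat.lcm m r / m = R := by
    rw [hlcmm, Nat.mul_div_cancel _ hm0]
  have hjM : j * M ≤ m.choose r := by
    have h1 : r * m.choose r / Nat.lcm m r = m.choose r / M := by
      rw [hlcmr, mul_comm M r, Nat.mul_div_mul_left _ _ hr0]
    rw [h1] at hj
    exact (Nat.le_div_iff_mul_le hM).mp hj
  haveI : NeZero M := ⟨hM.ne'⟩
  haveI : NeZero G := ⟨hG.ne'⟩
  obtain ⟨S', hScard, hSsize, hScov⟩ := EquitableAux.main M G R hcop hR1 hRM j
    (by rw [hMG, hGR]; exact hjM)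
  -- transfer along an equivalence
  have hcardEq : Fintype.card (Fin m) = Fintype.card (EquitableAux.X M G) := by
    simp [ZMod.card, hMG]
  let e : Fin m ≃ EquitableAux.X M G := Fintype.equivOfCardEq hcardEq
  let F : Finset (EquitableAux.X M G) ↪ Finset (Fin m) :=
    ⟨fun A => A.map e.symm.toEmbedding, fun A B h => Finset.map_injective _ h⟩
  have hmemF : ∀ (A : Finset (EquitableAux.X M G)) (i : Fin m), i ∈ F A ↔ e i ∈ A := by
    intro A i
    show i ∈ A.map e.symm.toEmbedding ↔ e i ∈ A
    simp only [F, Function.Embedding.coeFn_mk, Finset.mem_map, Equiv.coe_toEmbedding]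
    constructor
    · rintro ⟨a, ha, rfl⟩
      simpa using ha
    · intro h
      exact ⟨e i, h, by simp⟩
  refine ⟨S'.map F, ?_, ?_, ?_⟩
  · intro gS hgS
    rcases Finset.mem_map.mp hgS with ⟨A, hA, rfl⟩
    simp only [F, Function.Embedding.coeFn_mk]
    show (A.map e.symm.toEmbedding).card = r
    rw [Finset.card_map]
    rw [hScard A hA, hGR]
  · rw [Finset.card_map, hSsize, hdiv1]
  · intro i
    have hfilter : (S'.map F).filter (fun gg => i ∈ gg)
        = (S'.filter (fun A => e i ∈ A)).map F := by
      ext gg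
      simp only [Finset.mem_filter, Finset.mem_map]
      constructor
      · rintro ⟨⟨A, hA, rfl⟩, hi⟩
        exact ⟨A, ⟨hA, (hmemF A i).mp hi⟩, rfl⟩
      · rintro ⟨A, ⟨hA, hi⟩, rfl⟩
        exact ⟨⟨A, hA, rfl⟩, (hmemF A i).mpr hi⟩
    rw [hfilter, Finset.card_map, hScov (e i), hdiv2]
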